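/- Let B, M ∈ ℝ^{n×n} be symmetric with M invertible, A ∈ ℝ^{m×n}, τ ≠ 0, α ∈ ℝ, c ∈ ℝ, and define S = [[ −M⁻¹B, −M⁻¹Aᵀ ], [ τ⁻¹A, 0 ]] and P = [[ M, αAᵀ ], [ αA, τ I_m ]]. If the 2n×2n matrix K = [[ 2B − 2τ⁻¹α AᵀA − 2cM, αBM⁻¹ − 2cα I_n ], [ αM⁻¹B − 2cα I_n, αM⁻¹ ]] is positive semidefinite and 2α A M⁻¹ Aᵀ − 2τc I_m ⪰ α A M⁻¹ Aᵀ, then SᵀP + PS + 2cP ⪯ 0, i.e., −SᵀP − PS − 2cP is positive semidefinite. -/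

import Mathlib

open Matrix

/-- With `S`, `P` as in the scaled saddle-matrix setting, if the `2n×2n`
matrix `K = [[2B − 2τ⁻¹α AᵀA − 2cM, αBM⁻¹ − 2cαI],[αM⁻¹B − 2cαI, αM⁻¹]]` is positive
semidefinite and `2α AM⁻¹Aᵀ − 2τcI ⪰ α AM⁻¹Aᵀ`, then `SᵀP + PS + 2cP ⪯ 0`, i.e.
`−SᵀP − PS − 2cP` is positive semidefinite. -/
theorem stmt17 {n m : ℕ}
    (B M : Matrix (Fin n) (Fin n) ℝ) (hB : Bᵀ = B) (hMsymm : Mᵀ = M)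
    (hMinv : IsUnit M.det)
    (A : Matrix (Fin m) (Fin n) ℝ) (τ α c : ℝ) (hτ : τ ≠ 0)
    (S P : Matrix (Fin n ⊕ Fin m) (Fin n ⊕ Fin m) ℝ)
    (hS : S = Matrix.fromBlocks (-(M⁻¹ * B)) (-(M⁻¹ * Aᵀ)) (τ⁻¹ • A) 0)
    (hP : P = Matrix.fromBlocks M (α • Aᵀ) (α • A) (τ • 1))
    (K : Matrix (Fin n ⊕ Fin n) (Fin n ⊕ Fin n) ℝ)
    (hK : K = Matrix.fromBlocks
      ((2 : ℝ) • B - (2 * τ⁻¹ * α) • (Aᵀ * A) - (2 * c) • M)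
      (α • (B * M⁻¹) - (2 * c * α) • 1)
      (α • (M⁻¹ * B) - (2 * c * α) • 1)
      (α • M⁻¹))
    (hKpsd : K.PosSemidef)
    (h22 : ((2 * α) • (A * M⁻¹ * Aᵀ) - (2 * τ * c) • 1
      - α • (A * M⁻¹ * Aᵀ)).PosSemidef) :
    (-(Sᵀ * P) - P * S - (2 * c) • P).PosSemidef := by
  set R := (2 * α) • (A * M⁻¹ * Aᵀ) - (2 * τ * c) • 1 - α • (A * M⁻¹ * Aᵀ) with hR
  let L : Matrix (Fin n ⊕ Fin m) (Fin n ⊕ Fin n) ℝ := Matrix.fromBlocks 1 0 0 A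
  let N : Matrix (Fin n ⊕ Fin m) (Fin m) ℝ :=
    Matrix.fromRows (0 : Matrix (Fin n) (Fin m) ℝ) (1 : Matrix (Fin m) (Fin m) ℝ)
  have hNpart : N * R * Nᴴ = Matrix.fromBlocks (0 : Matrix (Fin n) (Fin n) ℝ) 0 0 R := by
    show Matrix.fromRows 0 1 * R * (Matrix.fromRows (0 : Matrix (Fin n) (Fin m) ℝ) 1)ᴴ = _
    rw [Matrix.conjTranspose_eq_transpose_of_trivial, Matrix.transpose_fromRows,
      Matrix.fromRows_mul, Matrix.fromRows_mul_fromCols]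
    simp
  have key : -(Sᵀ * P) - P * S - (2 * c) • P = L * K * Lᴴ + N * R * Nᴴ := by
    rw [hNpart]
    have hMi : M * M⁻¹ = 1 := Matrix.mul_nonsing_inv M hMinv
    have hMi' : M⁻¹ᵀ = M⁻¹ := by rw [Matrix.transpose_nonsing_inv, hMsymm]
    subst hS hP hK
    show _ = Matrix.fromBlocks 1 0 0 A * _ * (Matrix.fromBlocks 1 0 0 A)ᴴ + Matrix.fromBlocks (0 : Matrix (Fin n) (Fin n) ℝ) 0 0 _
    simp only [Matrix.conjTranspose_eq_transpose_of_trivial, starRingEnd_apply, star_trivial, Matrix.map_id, Matrix.map_id',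
      Matrix.transpose_fromRows, Matrix.fromBlocks_transpose,
      Matrix.fromBlocks_multiply, Matrix.fromRows_mul, Matrix.fromRows_mul_fromCols,
      Matrix.fromBlocks_smul, Matrix.fromBlocks_neg, Matrix.fromBlocks_add,
      Matrix.transpose_neg, Matrix.transpose_mul,
      Matrix.transpose_smul, Matrix.transpose_zero, Matrix.transpose_one,
      Matrix.transpose_transpose, hB, hMsymm, hMi', Matrix.mul_zero, Matrix.zero_mul,
      Matrix.mul_one, Matrix.one_mul, add_zero, zero_add, Matrix.neg_mul,
      Matrix.mul_neg, Matrix.smul_mul, Matrix.mul_smul, smul_zero, neg_zero]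
    have h1 : M * (M⁻¹ * B) = B := by rw [← Matrix.mul_assoc, hMi, Matrix.one_mul]
    have h2 : B * M⁻¹ * M = B := by
      rw [Matrix.mul_assoc, Matrix.nonsing_inv_mul M hMinv, Matrix.mul_one]
    have h3 : M * (M⁻¹ * Aᵀ) = Aᵀ := by rw [← Matrix.mul_assoc, hMi, Matrix.one_mul]
    have h4 : A * M⁻¹ * M = A := by
      rw [Matrix.mul_assoc, Matrix.nonsing_inv_mul M hMinv, Matrix.mul_one]
    have hττ : τ * τ⁻¹ = 1 := mul_inv_cancel₀ hτ
    have hττ' : τ⁻¹ * τ = 1 := inv_mul_cancel₀ hτ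
    rw [hR]
    simp only [h1, h2, h3, h4, smul_smul, hττ, hττ', one_smul, Matrix.mul_sub,
      Matrix.sub_mul, Matrix.mul_smul, Matrix.smul_mul, Matrix.mul_one, Matrix.one_mul,
      Matrix.add_mul, Matrix.mul_add, Matrix.mul_assoc, sub_eq_add_neg, Matrix.fromBlocks_neg, Matrix.fromBlocks_add]
    rw [Matrix.fromBlocks_inj]
    exact ⟨by module, by simp only [Matrix.neg_mul, Matrix.mul_neg, Matrix.smul_mul, Matrix.mul_smul, Matrix.one_mul, Matrix.mul_one]; module, by simp only [Matrix.neg_mul, Matrix.mul_neg, Matrix.smul_mul, Matrix.mul_smul, Matrix.one_mul, Matrix.mul_one]; module, by module⟩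
  rw [key]
  exact (hKpsd.mul_mul_conjTranspose_same L).add (h22.mul_mul_conjTranspose_same N)
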